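/- Let n ≥ 1 and let (μ_t)_{t ≥ 0} be a family of Radon measures on ℝⁿ such that sup_{t ≥ 0} μ_t(K) < ∞ for every compact K ⊂ ℝⁿ, and such that for every nonnegative, twice continuously differentiable, compactly supported φ : ℝⁿ → ℝ there exists a constant C(φ) ≥ 0 for which t ↦ ∫φ dμ_t − C(φ)·t is nonincreasing on [0,∞). Then the set of times t ∈ (0,∞) at which there exists a nonnegative continuous compactly supported ψ : ℝⁿ → ℝ with lim_{s → t⁻} ∫ψ dμ_s ≠ lim_{s → t⁺} ∫ψ dμ_s is at most countable; i.e., at all but countably many times t the map s ↦ μ_s is weakly-* continuous at t. -/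

import Mathlib

open MeasureTheory Filter Topology Metric
open scoped ENNReal NNReal Convolution

/-- Any nonnegative continuous compactly supported function on Euclidean space can be
uniformly approximated by a nonnegative `C²` compactly supported function, with support
contained in a slightly larger ball. -/
lemma smooth_approx_aux (n : ℕ) (ψ : EuclideanSpace ℝ (Fin n) → ℝ)
    (hc : Continuous ψ) (hs : HasCompactSupport ψ) (hψ0 : ∀ x, 0 ≤ ψ x)
    (m : ℝ) (hsupp : Function.support ψ ⊆ closedBall 0 m) {ε : ℝ} (hε : 0 < ε) :
    ∃ φ : EuclideanSpace ℝ (Fin n) → ℝ, ContDiff ℝ 2 φ ∧ HasCompactSupport φ ∧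
      (∀ x, 0 ≤ φ x) ∧ (∀ x, |φ x - ψ x| ≤ ε) ∧
      Function.support φ ⊆ closedBall 0 (m + 1) := by
  obtain ⟨δ, hδ0, hδ⟩ := Metric.uniformContinuous_iff.1
    (hs.uniformContinuous_of_continuous hc) ε hε
  set r : ℝ := min δ 1 with hr
  have hr0 : 0 < r := lt_min hδ0 one_pos
  set b : ContDiffBump (0 : EuclideanSpace ℝ (Fin n)) :=
    ⟨r / 2, r, by positivity, by linarith⟩ with hb
  set φ : EuclideanSpace ℝ (Fin n) → ℝ :=
    b.normed volume ⋆[ContinuousLinearMap.lsmul ℝ ℝ, volume] ψ with hφ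
  have hsub : Function.support φ ⊆ closedBall 0 (m + 1) := by
    intro x hx
    have h1 := support_convolution_subset (ContinuousLinearMap.lsmul ℝ ℝ)
      (f := b.normed volume) (g := ψ) (μ := volume) hx
    rw [Set.mem_add] at h1
    obtain ⟨a, ha, c, hcmem, rfl⟩ := h1
    have ha' : ‖a‖ < r := by
      have := b.support_normed_eq (μ := volume) ▸ ha
      simpa [mem_ball, dist_zero_right] using this
    have hc' : ‖c‖ ≤ m := by
      have := hsupp hcmem
      simpa [mem_closedBall, dist_zero_right] using this
    have : ‖a + c‖ ≤ ‖a‖ + ‖c‖ := norm_add_le _ _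
    have hr1 : r ≤ 1 := min_le_right _ _
    simp only [mem_closedBall, dist_zero_right]
    linarith
  have hcs : HasCompactSupport φ := by
    apply HasCompactSupport.intro (isCompact_closedBall (0 : EuclideanSpace ℝ (Fin n)) (m + 1))
    intro x hx
    by_contra h
    exact hx (hsub h)
  refine ⟨φ, ?_, hcs, ?_, ?_, hsub⟩
  · exact b.hasCompactSupport_normed.contDiff_convolution_left _
      b.contDiff_normed (hc.locallyIntegrable)
  · intro x
    rw [hφ, convolution_def]
    refine integral_nonneg fun t => ?_
    simp only [ContinuousLinearMap.lsmul_apply, smul_eq_mul]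
    exact mul_nonneg (b.nonneg_normed t) (hψ0 _)
  · intro x
    have h2 : ∀ y ∈ ball x b.rOut, dist (ψ y) (ψ x) ≤ ε := by
      intro y hy
      refine (hδ ?_).le
      have : dist y x < r := by simpa [mem_ball] using hy
      exact this.trans_le (min_le_left _ _)
    have := b.dist_normed_convolution_le (μ := volume) hc.aestronglyMeasurable h2
    rwa [Real.dist_eq] at this

/-- The set of times at which the mass of a semi-decreasing family of Radon measures
is not weakly-* continuous is at most countable (used in Lemma 5.5 (3)). -/
theorem stmt_5 (n : ℕ) (hn : 1 ≤ n)
    (μ : ℝ → Measure (EuclideanSpace ℝ (Fin n)))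
    (hrad : ∀ t, IsLocallyFiniteMeasure (μ t))
    (hmass : ∀ K : Set (EuclideanSpace ℝ (Fin n)), IsCompact K →
      ∃ C : ℝ≥0∞, C ≠ ⊤ ∧ ∀ t, 0 ≤ t → μ t K ≤ C)
    (hsemi : ∀ φ : EuclideanSpace ℝ (Fin n) → ℝ,
      ContDiff ℝ 2 φ → HasCompactSupport φ → (∀ x, 0 ≤ φ x) →
      ∃ C : ℝ, 0 ≤ C ∧ AntitoneOn (fun t => (∫ x, φ x ∂ μ t) - C * t) (Set.Ici 0)) :
    Set.Countable {t : ℝ | 0 < t ∧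
      ∃ ψ : EuclideanSpace ℝ (Fin n) → ℝ, Continuous ψ ∧ HasCompactSupport ψ ∧
        (∀ x, 0 ≤ ψ x) ∧
        ∃ L R : ℝ, Tendsto (fun s => ∫ x, ψ x ∂ μ s) (𝓝[<] t) (𝓝 L) ∧
          Tendsto (fun s => ∫ x, ψ x ∂ μ s) (𝓝[>] t) (𝓝 R) ∧ L ≠ R} := by
  classical
  -- a countable family of smooth cutoff functions
  have hbump : ∀ m : ℕ, ∃ χ : EuclideanSpace ℝ (Fin n) → ℝ,
      ContDiff ℝ 2 χ ∧ HasCompactSupport χ ∧ (∀ x, 0 ≤ χ x) ∧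
      (∀ x ∈ closedBall (0 : EuclideanSpace ℝ (Fin n)) ((m : ℝ) + 1), χ x = 1) := by
    intro m
    set b : ContDiffBump (0 : EuclideanSpace ℝ (Fin n)) :=
      ⟨(m : ℝ) + 1, (m : ℝ) + 2, by positivity, by linarith⟩ with hb
    exact ⟨b, b.contDiff, b.hasCompactSupport, b.nonneg', fun x hx => b.one_of_mem_closedBall hx⟩
  choose χ hχ2 hχs hχ0 hχ1 using hbump
  choose Cm hCm0 hCm using fun m => hsemi (χ m) (hχ2 m) (hχs m) (hχ0 m)
  set G : ℕ → ℝ → ℝ := fun m s => (∫ x, χ m x ∂ μ (max s 0)) - Cm m * max s 0 with hG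
  have hGanti : ∀ m, Antitone (G m) := fun m a b hab =>
    hCm m (Set.mem_Ici.2 (le_max_right _ _)) (Set.mem_Ici.2 (le_max_right _ _))
      (max_le_max hab le_rfl)
  have hD : (⋃ m, {t : ℝ | ¬ContinuousAt (G m) t}).Countable :=
    Set.countable_iUnion fun m => (hGanti m).countable_not_continuousAt
  refine Set.Countable.mono ?_ hD
  intro t ht
  simp only [Set.mem_setOf_eq] at ht
  obtain ⟨ht0, ψ, hψc, hψs, hψ0, L, R, hL, hR, hLR⟩ := ht
  by_contra htD
  simp only [Set.mem_iUnion, Set.mem_setOf_eq, not_exists, not_not] at htD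
  -- htD : ∀ m, ContinuousAt (G m) t
  obtain ⟨r0, hr0⟩ := hψs.isBounded.subset_closedBall (0 : EuclideanSpace ℝ (Fin n))
  set m : ℕ := ⌈r0⌉₊ with hmdef
  have hm : tsupport ψ ⊆ closedBall 0 (m : ℝ) :=
    hr0.trans (closedBall_subset_closedBall (Nat.le_ceil r0))
  set K : Set (EuclideanSpace ℝ (Fin n)) := closedBall 0 ((m : ℝ) + 2) with hK
  obtain ⟨CK, hCKt, hCK⟩ := hmass K (isCompact_closedBall _ _)
  set Cr : ℝ := CK.toReal with hCr
  have hCr0 : 0 ≤ Cr := ENNReal.toReal_nonneg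
  -- integrability helper
  have hint : ∀ (f : EuclideanSpace ℝ (Fin n) → ℝ), Continuous f → HasCompactSupport f →
      ∀ s : ℝ, Integrable f (μ s) := by
    intro f hf hsf s
    haveI := hrad s
    exact hf.integrable_of_hasCompactSupport hsf
  have hmuK : ∀ s : ℝ, 0 ≤ s → (μ s K).toReal ≤ Cr :=
    fun s hs => ENNReal.toReal_mono hCKt (hCK s hs)
  have hmuKfin : ∀ s : ℝ, 0 ≤ s → μ s K < ⊤ :=
    fun s hs => (hCK s hs).trans_lt hCKt.lt_top
  refine hLR (eq_of_forall_dist_le fun ε hε => ?_)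
  have hCr1 : (0:ℝ) < Cr + 1 := by linarith
  set ε' : ℝ := ε / (2 * (Cr + 1)) with hε'def
  have hε'0 : 0 < ε' := by positivity
  obtain ⟨φ, hφ2, hφs, hφ0, hφψ, hφsupp⟩ := smooth_approx_aux n ψ hψc hψs hψ0 (m : ℝ)
    ((subset_closure).trans hm) hε'0
  -- the pointwise bound between the two integrals
  have hdiff : ∀ s : ℝ, 0 < s →
      |(∫ x, ψ x ∂ μ s) - ∫ x, φ x ∂ μ s| ≤ ε' * Cr := by
    intro s hs
    rw [← integral_sub (hint ψ hψc hψs s) (hint φ hφ2.continuous hφs s)]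
    have hzero : ∀ x, x ∉ K → ψ x - φ x = 0 := by
      intro x hx
      have h1 : ψ x = 0 := by
        by_contra h
        exact hx (closedBall_subset_closedBall (by linarith) (hm (subset_closure h)))
      have h2 : φ x = 0 := by
        by_contra h
        exact hx (closedBall_subset_closedBall (by linarith) (hφsupp h))
      rw [h1, h2, sub_zero]
    rw [← setIntegral_eq_integral_of_forall_compl_eq_zero hzero]
    calc |∫ x in K, (ψ x - φ x) ∂ μ s|
        ≤ ε' * (μ s K).toReal := by
          rw [← Real.norm_eq_abs]
          refine norm_setIntegral_le_of_norm_le_const (hmuKfin s hs.le)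
            fun x _ => ?_
          rw [Real.norm_eq_abs, abs_sub_comm]
          exact hφψ x
      _ ≤ ε' * Cr := mul_le_mul_of_nonneg_left (hmuK s hs.le) hε'0.le
  -- a bound for φ by the cutoff
  obtain ⟨x₀, hx₀⟩ := hφ2.continuous.exists_forall_ge_of_hasCompactSupport hφs
  set M : ℝ := φ x₀ with hMdef
  have hM0 : 0 ≤ M := hφ0 x₀
  have hφle : ∀ x, φ x ≤ M * χ m x := by
    intro x
    by_cases hx : φ x = 0
    · rw [hx]; exact mul_nonneg hM0 (hχ0 m x)
    · have hx1 : x ∈ closedBall (0 : EuclideanSpace ℝ (Fin n)) ((m : ℝ) + 1) := hφsupp hx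
      rw [hχ1 m x hx1, mul_one]
      exact hx₀ x
  set φ₂ : EuclideanSpace ℝ (Fin n) → ℝ := fun x => M * χ m x - φ x with hφ₂def
  have hφ₂2 : ContDiff ℝ 2 φ₂ := (contDiff_const.mul (hχ2 m)).sub hφ2
  have hφ₂s : HasCompactSupport φ₂ := by
    have hA : HasCompactSupport (fun x => M * χ m x) := (hχs m).mul_left
    exact hA.comp₂_left hφs (sub_self (0:ℝ))
  have hφ₂0 : ∀ x, 0 ≤ φ₂ x := fun x => sub_nonneg.2 (hφle x)
  obtain ⟨C₂, hC₂0, hC₂⟩ := hsemi φ₂ hφ₂2 hφ₂s hφ₂0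
  obtain ⟨C₁, hC₁0, hC₁⟩ := hsemi φ hφ2 hφs hφ0
  have hsplit : ∀ s : ℝ, (∫ x, φ₂ x ∂ μ s) = M * (∫ x, χ m x ∂ μ s) - ∫ x, φ x ∂ μ s := by
    intro s
    rw [hφ₂def]
    rw [integral_sub (((hint (χ m) (hχ2 m).continuous (hχs m) s)).const_mul M)
      (hint φ hφ2.continuous hφs s), integral_const_mul]
  -- the product filter
  set F : Filter (ℝ × ℝ) := (𝓝[<] t) ×ˢ (𝓝[>] t) with hF
  haveI : F.NeBot := by
    rw [hF]
    exact Filter.prod_neBot.2 ⟨inferInstance, inferInstance⟩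
  have h1 : Tendsto (fun p : ℝ × ℝ => p.1) F (𝓝[<] t) := tendsto_fst
  have h2 : Tendsto (fun p : ℝ × ℝ => p.2) F (𝓝[>] t) := tendsto_snd
  have h1' : Tendsto (fun p : ℝ × ℝ => p.1) F (𝓝 t) := h1.mono_right nhdsWithin_le_nhds
  have h2' : Tendsto (fun p : ℝ × ℝ => p.2) F (𝓝 t) := h2.mono_right nhdsWithin_le_nhds
  have hevmem : ∀ᶠ p : ℝ × ℝ in F, 0 < p.1 ∧ p.1 < t ∧ t < p.2 := by
    have e1 : ∀ᶠ s in 𝓝[<] t, 0 < s :=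
      eventually_nhdsWithin_of_eventually_nhds (eventually_gt_nhds ht0)
    have e2 : ∀ᶠ s in 𝓝[<] t, s < t := eventually_mem_nhdsWithin
    have e3 : ∀ᶠ s in 𝓝[>] t, t < s := eventually_mem_nhdsWithin
    have := ((e1.and e2).prod_inl (𝓝[>] t)).and (e3.prod_inr (𝓝[<] t))
    exact this.mono fun p hp => ⟨hp.1.1, hp.1.2, hp.2⟩
  -- key eventual inequalities
  have hkey : ∀ᶠ p : ℝ × ℝ in F,
      ((∫ x, ψ x ∂ μ p.2) ≤ (∫ x, ψ x ∂ μ p.1) + 2 * (ε' * Cr) + C₁ * (p.2 - p.1)) ∧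
      ((∫ x, ψ x ∂ μ p.1) ≤ (∫ x, ψ x ∂ μ p.2) + 2 * (ε' * Cr)
        + M * ((∫ x, χ m x ∂ μ p.1) - (∫ x, χ m x ∂ μ p.2)) + C₂ * (p.2 - p.1)) := by
    filter_upwards [hevmem] with p hp
    obtain ⟨hp1, hp2, hp3⟩ := hp
    have hs0 : (0:ℝ) ≤ p.1 := hp1.le
    have hp2' : (0:ℝ) < p.2 := hp1.trans (hp2.trans hp3)
    have hss' : p.1 ≤ p.2 := (hp2.trans hp3).le
    have i1 := hC₁ (Set.mem_Ici.2 hs0) (Set.mem_Ici.2 hp2'.le) hss'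
    have i2 := hC₂ (Set.mem_Ici.2 hs0) (Set.mem_Ici.2 hp2'.le) hss'
    simp only [] at i1 i2
    rw [hsplit p.1, hsplit p.2] at i2
    have d1 := abs_sub_le_iff.1 (hdiff p.1 hp1)
    have d2 := abs_sub_le_iff.1 (hdiff p.2 hp2')
    have e1 : C₁ * (p.2 - p.1) = C₁ * p.2 - C₁ * p.1 := mul_sub _ _ _
    have e2 : C₂ * (p.2 - p.1) = C₂ * p.2 - C₂ * p.1 := mul_sub _ _ _
    have e3 : M * ((∫ x, χ m x ∂ μ p.1) - (∫ x, χ m x ∂ μ p.2))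
        = M * (∫ x, χ m x ∂ μ p.1) - M * (∫ x, χ m x ∂ μ p.2) := mul_sub _ _ _
    constructor
    · linarith [d1.1, d1.2, d2.1, d2.2]
    · linarith [d1.1, d1.2, d2.1, d2.2]
  -- limits
  have hLf : Tendsto (fun p : ℝ × ℝ => ∫ x, ψ x ∂ μ p.1) F (𝓝 L) := hL.comp tendsto_fst
  have hRf : Tendsto (fun p : ℝ × ℝ => ∫ x, ψ x ∂ μ p.2) F (𝓝 R) := hR.comp tendsto_snd
  have hsub0 : Tendsto (fun p : ℝ × ℝ => p.2 - p.1) F (𝓝 0) := by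
    have := h2'.sub h1'
    simpa using this
  have hGdiff : Tendsto
      (fun p : ℝ × ℝ => (∫ x, χ m x ∂ μ p.1) - (∫ x, χ m x ∂ μ p.2)) F (𝓝 0) := by
    have hc1 : Tendsto (fun p : ℝ × ℝ => G m p.1) F (𝓝 (G m t)) := ((htD m).tendsto).comp h1'
    have hc2 : Tendsto (fun p : ℝ × ℝ => G m p.2) F (𝓝 (G m t)) := ((htD m).tendsto).comp h2'
    have hbig : Tendsto (fun p : ℝ × ℝ =>
        (G m p.1 + Cm m * p.1) - (G m p.2 + Cm m * p.2)) F (𝓝 0) := by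
      have := (hc1.add (h1'.const_mul (Cm m))).sub (hc2.add (h2'.const_mul (Cm m)))
      simpa using this
    refine hbig.congr' ?_
    filter_upwards [hevmem] with p hp
    have e1 : max p.1 0 = p.1 := max_eq_left hp.1.le
    have e2 : max p.2 0 = p.2 := max_eq_left (hp.1.trans (hp.2.1.trans hp.2.2)).le
    simp only [hG, e1, e2]
    ring
  have hRL : R ≤ L + 2 * (ε' * Cr) := by
    have hrhs : Tendsto (fun p : ℝ × ℝ =>
        (∫ x, ψ x ∂ μ p.1) + 2 * (ε' * Cr) + C₁ * (p.2 - p.1)) F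
        (𝓝 (L + 2 * (ε' * Cr) + C₁ * 0)) :=
      (hLf.add tendsto_const_nhds).add (hsub0.const_mul C₁)
    have := le_of_tendsto_of_tendsto hRf hrhs (hkey.mono fun p hp => hp.1)
    simpa using this
  have hLR' : L ≤ R + 2 * (ε' * Cr) := by
    have hrhs : Tendsto (fun p : ℝ × ℝ =>
        (∫ x, ψ x ∂ μ p.2) + 2 * (ε' * Cr)
          + M * ((∫ x, χ m x ∂ μ p.1) - (∫ x, χ m x ∂ μ p.2)) + C₂ * (p.2 - p.1)) F
        (𝓝 (R + 2 * (ε' * Cr) + M * 0 + C₂ * 0)) :=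
      ((hRf.add tendsto_const_nhds).add (hGdiff.const_mul M)).add (hsub0.const_mul C₂)
    have := le_of_tendsto_of_tendsto hLf hrhs (hkey.mono fun p hp => hp.2)
    simpa using this
  -- conclude
  have habs : |L - R| ≤ 2 * (ε' * Cr) := abs_sub_le_iff.2 ⟨by linarith, by linarith⟩
  have hfin : 2 * (ε' * Cr) ≤ ε := by
    have hne : Cr + 1 ≠ 0 := ne_of_gt hCr1
    have h2' : 2 * (ε' * Cr) = ε * (Cr / (Cr + 1)) := by
      rw [hε'def]; field_simp
    have hd1 : Cr / (Cr + 1) ≤ 1 := by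
      rw [div_le_one hCr1]; linarith
    rw [h2']
    calc ε * (Cr / (Cr + 1)) ≤ ε * 1 := mul_le_mul_of_nonneg_left hd1 hε.le
      _ = ε := mul_one ε
  rw [Real.dist_eq]
  exact habs.trans hfin
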